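/- In the QBF-reduction Stackelberg task for a formula ∃x∀y φ with φ in DNF (leader selects truth values of the x-variables via sel-actions, follower selects y-values and can mark cube i as violated via actions requiring the falsifying literal's assignment), a full leader plan assigning all x-variables makes the follower unable to achieve all cube-markers {c_i} if and only if the chosen x-assignment satisfies ∀y φ. -/

import Mathlib

/-- A STRIPS action: positive preconditions `pre`, negative preconditions `npre`,
add effect `add`, delete effect `del`, and a cost. -/
structure Act (V : Type) where
  pre : Finset V
  npre : Finset V
  add : Finset V
  del : Finset V
  cost : ℕ

variable {V : Type} [DecidableEq V]

/-- An action is applicable in a state iff its precondition holds. -/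
def app (s : Finset V) (a : Act V) : Prop := a.pre ⊆ s ∧ Disjoint a.npre s

/-- Executing an action: s⟦a⟧ = (s \ del(a)) ∪ add(a). -/
def exec (s : Finset V) (a : Act V) : Finset V := (s \ a.del) ∪ a.add

/-- Iterated execution of an action sequence. -/
def execSeq (s : Finset V) : List (Act V) → Finset V
  | [] => s
  | a :: π => execSeq (exec s a) π

/-- Iterated applicability of an action sequence. -/
def appSeq (s : Finset V) : List (Act V) → Prop
  | [] => True
  | a :: π => app s a ∧ appSeq (exec s a) π

/-- The cost of an action sequence. -/
def listCost (π : List (Act V)) : ℕ := (π.map Act.cost).sum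

/-- Facts of the QBF-reduction task: truth/selection facts for x- and y-variables,
and a marker fact per cube. -/
inductive QFact (n m K : ℕ) where
  | Tx : Fin n → QFact n m K
  | Fx : Fin n → QFact n m K
  | Sx : Fin n → QFact n m K
  | Ty : Fin m → QFact n m K
  | Fy : Fin m → QFact n m K
  | Sy : Fin m → QFact n m K
  | C : Fin K → QFact n m K
  deriving DecidableEq

/-- Leader action selecting truth value b for x_i. -/
def selX (n m K : ℕ) (i : Fin n) (b : Bool) : Act (QFact n m K) :=
  { pre := ∅, npre := {QFact.Sx i},
    add := {QFact.Sx i, if b then QFact.Tx i else QFact.Fx i}, del := ∅, cost := 1 }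

/-- Follower action selecting truth value b for y_j. -/
def selY (n m K : ℕ) (j : Fin m) (b : Bool) : Act (QFact n m K) :=
  { pre := ∅, npre := {QFact.Sy j},
    add := {QFact.Sy j, if b then QFact.Ty j else QFact.Fy j}, del := ∅, cost := 1 }

/-- The fact asserting the falsifying assignment for a literal. -/
def falsify (n m K : ℕ) (l : (Fin n ⊕ Fin m) × Bool) : QFact n m K :=
  match l with
  | (Sum.inl i, true) => QFact.Fx i
  | (Sum.inl i, false) => QFact.Tx i
  | (Sum.inr j, true) => QFact.Fy j
  | (Sum.inr j, false) => QFact.Ty j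

/-- Follower action marking cube k as violated via literal l. -/
def valAct (n m K : ℕ) (k : Fin K) (l : (Fin n ⊕ Fin m) × Bool) : Act (QFact n m K) :=
  { pre := {falsify n m K l}, npre := ∅, add := {QFact.C k}, del := ∅, cost := 1 }

/-- Follower actions: y-selection actions and cube-violation actions. -/
def isFollowerAct (n m K : ℕ) (cubes : Fin K → List ((Fin n ⊕ Fin m) × Bool))
    (a : Act (QFact n m K)) : Prop :=
  (∃ j b, a = selY n m K j b) ∨ (∃ k, ∃ l ∈ cubes k, a = valAct n m K k l)

/-- Truth value of a literal under assignments α (to x) and β (to y). -/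
def litVal (n m : ℕ) (α : Fin n → Bool) (β : Fin m → Bool)
    (l : (Fin n ⊕ Fin m) × Bool) : Bool :=
  (match l.1 with | Sum.inl i => α i | Sum.inr j => β j) == l.2

section Generic
variable {V : Type} [DecidableEq V]

lemma execSeq_append (s : Finset V) (π1 π2 : List (Act V)) :
    execSeq s (π1 ++ π2) = execSeq (execSeq s π1) π2 := by
  induction π1 generalizing s with
  | nil => rfl
  | cons a π ih => simp [execSeq, ih]

lemma appSeq_append {s : Finset V} {π1 π2 : List (Act V)} :
    appSeq s (π1 ++ π2) ↔ appSeq s π1 ∧ appSeq (execSeq s π1) π2 := by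
  induction π1 generalizing s with
  | nil => simp [appSeq, execSeq]
  | cons a π ih => simp [appSeq, execSeq, ih, and_assoc]

lemma exec_of_del_empty {s : Finset V} {a : Act V} (h : a.del = ∅) :
    exec s a = s ∪ a.add := by simp [exec, h]

lemma mem_execSeq {π : List (Act V)} (hd : ∀ a ∈ π, a.del = ∅) (s : Finset V) (x : V) :
    x ∈ execSeq s π ↔ x ∈ s ∨ ∃ a ∈ π, x ∈ a.add := by
  induction π generalizing s with
  | nil => simp [execSeq]
  | cons a π ih =>
    rw [execSeq, ih (fun b hb => hd b (List.mem_cons_of_mem a hb)),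
      exec_of_del_empty (hd a List.mem_cons_self)]
    simp only [Finset.mem_union, List.mem_cons]
    constructor
    · rintro ((h | h) | ⟨b, hb, h⟩)
      · exact Or.inl h
      · exact Or.inr ⟨a, Or.inl rfl, h⟩
      · exact Or.inr ⟨b, Or.inr hb, h⟩
    · rintro (h | ⟨b, (rfl | hb), h⟩)
      · exact Or.inl (Or.inl h)
      · exact Or.inl (Or.inr h)
      · exact Or.inr ⟨b, hb, h⟩

lemma subset_execSeq {π : List (Act V)} (hd : ∀ a ∈ π, a.del = ∅) (s : Finset V) :
    s ⊆ execSeq s π := fun x hx => (mem_execSeq hd s x).mpr (Or.inl hx)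

lemma pre_subset_execSeq {π : List (Act V)} (hd : ∀ a ∈ π, a.del = ∅) {s : Finset V}
    (happ : appSeq s π) : ∀ a ∈ π, a.pre ⊆ execSeq s π := by
  induction π generalizing s with
  | nil => simp
  | cons a π ih =>
    intro b hb
    rcases List.mem_cons.mp hb with rfl | hb
    · refine happ.1.1.trans (Finset.Subset.trans ?_
        (subset_execSeq (fun c hc => hd c (List.mem_cons_of_mem b hc)) (exec s b)))
      rw [exec_of_del_empty (hd b List.mem_cons_self)]
      exact Finset.subset_union_left
    · exact ih (fun c hc => hd c (List.mem_cons_of_mem a hc)) happ.2 b hb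

lemma appSeq_of_pre {π : List (Act V)} {s : Finset V}
    (h : ∀ a ∈ π, a.del = ∅ ∧ a.npre = ∅ ∧ a.pre ⊆ s) : appSeq s π := by
  induction π generalizing s with
  | nil => trivial
  | cons a π ih =>
    obtain ⟨hd, hn, hp⟩ := h a List.mem_cons_self
    refine ⟨⟨hp, by simp [hn]⟩, ih fun b hb => ?_⟩
    obtain ⟨hd', hn', hp'⟩ := h b (List.mem_cons_of_mem a hb)
    exact ⟨hd', hn', hp'.trans (by rw [exec_of_del_empty hd]; exact Finset.subset_union_left)⟩

end Generic

section Specific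
variable (n m K : ℕ)

lemma follower_del_empty (cubes : Fin K → List ((Fin n ⊕ Fin m) × Bool))
    {a : Act (QFact n m K)} (h : isFollowerAct n m K cubes a) : a.del = ∅ := by
  rcases h with ⟨j, b, rfl⟩ | ⟨k, l, _, rfl⟩ <;> rfl

lemma mem_leaderState (α : Fin n → Bool) (x : QFact n m K) :
    x ∈ execSeq (∅ : Finset (QFact n m K)) (List.ofFn fun i => selX n m K i (α i)) ↔
      ∃ i, x = QFact.Sx i ∨ x = (if α i then QFact.Tx i else QFact.Fx i) := by
  rw [mem_execSeq (by intro a ha; obtain ⟨i, rfl⟩ := List.mem_ofFn.mp ha; rfl)]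
  simp only [Finset.notMem_empty, false_or, List.mem_ofFn, Set.mem_range]
  constructor
  · rintro ⟨a, ⟨i, rfl⟩, h⟩
    simp only [selX, Finset.mem_insert, Finset.mem_singleton] at h
    exact ⟨i, h⟩
  · rintro ⟨i, h⟩
    exact ⟨_, ⟨i, rfl⟩, by simp only [selX, Finset.mem_insert, Finset.mem_singleton]; exact h⟩

lemma Tx_mem_s0 (α : Fin n → Bool) (i : Fin n) :
    QFact.Tx (m := m) (K := K) i ∈ execSeq (∅ : Finset (QFact n m K))
      (List.ofFn fun i => selX n m K i (α i)) ↔ α i = true := by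
  rw [mem_leaderState]
  constructor
  · rintro ⟨i', (h | h)⟩
    · exact absurd h (by simp)
    · rcases hb : α i' with _ | _ <;> rw [hb] at h <;> simp at h
      obtain ⟨rfl⟩ := h; exact hb
  · intro h; exact ⟨i, Or.inr (by rw [h]; rfl)⟩

lemma Fx_mem_s0 (α : Fin n → Bool) (i : Fin n) :
    QFact.Fx (m := m) (K := K) i ∈ execSeq (∅ : Finset (QFact n m K))
      (List.ofFn fun i => selX n m K i (α i)) ↔ α i = false := by
  rw [mem_leaderState]
  constructor
  · rintro ⟨i', (h | h)⟩
    · exact absurd h (by simp)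
    · rcases hb : α i' with _ | _ <;> rw [hb] at h <;> simp at h
      obtain ⟨rfl⟩ := h; exact hb
  · intro h; exact ⟨i, Or.inr (by rw [h]; rfl)⟩

lemma s0_no_y (α : Fin n → Bool) (x : QFact n m K)
    (hx : (∃ j, x = QFact.Ty j ∨ x = QFact.Fy j ∨ x = QFact.Sy j) ∨ ∃ k, x = QFact.C k) :
    x ∉ execSeq (∅ : Finset (QFact n m K)) (List.ofFn fun i => selX n m K i (α i)) := by
  rw [mem_leaderState]
  rintro ⟨i, (rfl | h)⟩
  · rcases hx with ⟨j, h | h | h⟩ | ⟨k, h⟩ <;> simp at h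
  · rcases hb : α i with _ | _ <;> rw [hb] at h <;> subst h <;>
      rcases hx with ⟨j, h | h | h⟩ | ⟨k, h⟩ <;> simp at h

/-- Invariant: each y-variable has at most one truth value, and a value implies selection. -/
def good (s : Finset (QFact n m K)) : Prop :=
  ∀ j : Fin m, ((QFact.Ty j ∈ s ∨ QFact.Fy j ∈ s) → QFact.Sy j ∈ s) ∧
    ¬(QFact.Ty j ∈ s ∧ QFact.Fy j ∈ s)

lemma good_preserve {cubes : Fin K → List ((Fin n ⊕ Fin m) × Bool)}
    {s : Finset (QFact n m K)} {a : Act (QFact n m K)}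
    (hf : isFollowerAct n m K cubes a) (ha : app s a) (hg : good n m K s) :
    good n m K (exec s a) := by
  rcases hf with ⟨j', b, rfl⟩ | ⟨k, l, _, rfl⟩
  · have hSy : QFact.Sy j' ∉ s := fun h =>
      Finset.disjoint_left.mp ha.2 (Finset.mem_singleton_self _) h
    have hTy : QFact.Ty j' ∉ s := fun h => hSy ((hg j').1 (Or.inl h))
    have hFy : QFact.Fy j' ∉ s := fun h => hSy ((hg j').1 (Or.inr h))
    intro j
    obtain ⟨h1, h2⟩ := hg j
    by_cases hj : j = j'
    · subst hj
      cases b <;> simp [exec, selY, hTy, hFy] <;> tauto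
    · cases b <;> simp [exec, selY, hj] <;> tauto
  · intro j
    obtain ⟨h1, h2⟩ := hg j
    simp [exec, valAct] <;> tauto
end Specific

section Specific2
variable (n m K : ℕ)

lemma good_execSeq {cubes : Fin K → List ((Fin n ⊕ Fin m) × Bool)}
    {s : Finset (QFact n m K)} {π : List (Act (QFact n m K))}
    (hg : good n m K s) (ha : appSeq s π)
    (hf : ∀ a ∈ π, isFollowerAct n m K cubes a) : good n m K (execSeq s π) := by
  induction π generalizing s with
  | nil => exact hg
  | cons a π ih =>
    exact ih (good_preserve n m K (hf a List.mem_cons_self) ha.1 hg) ha.2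
      (fun b hb => hf b (List.mem_cons_of_mem a hb))

lemma appSeq_selY_list (β : Fin m → Bool) (l : List (Fin m)) (hnd : l.Nodup)
    {s : Finset (QFact n m K)} (hs : ∀ j ∈ l, QFact.Sy j ∉ s) :
    appSeq s (l.map fun j => selY n m K j (β j)) := by
  induction l generalizing s with
  | nil => trivial
  | cons j l ih =>
    obtain ⟨hj, hnd'⟩ := List.nodup_cons.mp hnd
    refine ⟨⟨by simp [selY], by simp [selY, Finset.disjoint_singleton_left,
      hs j List.mem_cons_self]⟩, ?_⟩
    apply ih hnd'
    intro j' hj'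
    have hne : j' ≠ j := fun h => hj (h ▸ hj')
    have := hs j' (List.mem_cons_of_mem j hj')
    cases hb : β j <;> simp [exec, selY, hb, this, hne]

end Specific2

/-- In the QBF-reduction Stackelberg task for ∃x∀y φ (φ in DNF, given by `cubes`),
the full leader plan choosing assignment α makes the follower unable to achieve all
cube markers iff α satisfies ∀y φ. -/
theorem qbf_reduction (n m K : ℕ) (cubes : Fin K → List ((Fin n ⊕ Fin m) × Bool))
    (α : Fin n → Bool) :
    (∀ πF, (∀ a ∈ πF, isFollowerAct n m K cubes a) →
      ¬ (appSeq (execSeq (∅ : Finset (QFact n m K))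
            (List.ofFn fun i => selX n m K i (α i))) πF ∧
         (Finset.univ.image (QFact.C (n := n) (m := m) (K := K))) ⊆
           execSeq (execSeq (∅ : Finset (QFact n m K))
             (List.ofFn fun i => selX n m K i (α i))) πF)) ↔
    ∀ β : Fin m → Bool, ∃ k : Fin K, ∀ l ∈ cubes k, litVal n m α β l = true := by
  classical
  set s0 := execSeq (∅ : Finset (QFact n m K))
    (List.ofFn fun i => selX n m K i (α i)) with hs0
  constructor
  · -- LHS → RHS (contrapositive)
    intro hL
    by_contra hR
    push_neg at hR
    obtain ⟨β, hβ⟩ := hR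
    choose g hg1 hg2 using hβ
    set π1 : List (Act (QFact n m K)) := List.ofFn fun j => selY n m K j (β j) with hπ1
    set π2 : List (Act (QFact n m K)) := List.ofFn fun k => valAct n m K k (g k) with hπ2
    have hd1 : ∀ a ∈ π1, a.del = ∅ := by
      intro a ha; rw [hπ1] at ha; obtain ⟨j, rfl⟩ := List.mem_ofFn.mp ha; rfl
    have hd2 : ∀ a ∈ π2, a.del = ∅ := by
      intro a ha; rw [hπ2] at ha; obtain ⟨k, rfl⟩ := List.mem_ofFn.mp ha; rfl
    have hfol : ∀ a ∈ π1 ++ π2, isFollowerAct n m K cubes a := by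
      intro a ha
      rcases List.mem_append.mp ha with h | h
      · rw [hπ1] at h; obtain ⟨j, rfl⟩ := List.mem_ofFn.mp h
        exact Or.inl ⟨j, β j, rfl⟩
      · rw [hπ2] at h; obtain ⟨k, rfl⟩ := List.mem_ofFn.mp h
        exact Or.inr ⟨k, g k, hg1 k, rfl⟩
    have happ1 : appSeq s0 π1 := by
      rw [hπ1, List.ofFn_eq_map]
      exact appSeq_selY_list n m K β _ (List.nodup_finRange m)
        (fun j _ => s0_no_y n m K α _ (Or.inl ⟨j, Or.inr (Or.inr rfl)⟩))
    have mem_s1 : ∀ x : QFact n m K, x ∈ execSeq s0 π1 ↔ x ∈ s0 ∨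
        ∃ j, x = QFact.Sy j ∨ x = (if β j then QFact.Ty j else QFact.Fy j) := by
      intro x
      rw [mem_execSeq hd1, hπ1]
      simp only [List.mem_ofFn, Set.mem_range]
      constructor
      · rintro (h | ⟨a, ⟨j, rfl⟩, h⟩)
        · exact Or.inl h
        · simp only [selY, Finset.mem_insert, Finset.mem_singleton] at h
          exact Or.inr ⟨j, h⟩
      · rintro (h | ⟨j, h⟩)
        · exact Or.inl h
        · exact Or.inr ⟨_, ⟨j, rfl⟩,
            by simp only [selY, Finset.mem_insert, Finset.mem_singleton]; exact h⟩
    have hfals : ∀ k, falsify n m K (g k) ∈ execSeq s0 π1 := by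
      intro k
      have hl2 := hg2 k
      rcases hgk : g k with ⟨i | j, b⟩ <;> rw [hgk] at hl2 <;> cases b <;>
        simp only [litVal, beq_iff_eq, Bool.not_eq_true] at hl2
      · exact (mem_s1 _).mpr (Or.inl ((Tx_mem_s0 n m K α i).mpr (by simpa using hl2)))
      · exact (mem_s1 _).mpr (Or.inl ((Fx_mem_s0 n m K α i).mpr (by simpa using hl2)))
      · refine (mem_s1 _).mpr (Or.inr ⟨j, Or.inr ?_⟩)
        have : β j = true := by simpa using hl2
        rw [this]; rfl
      · refine (mem_s1 _).mpr (Or.inr ⟨j, Or.inr ?_⟩)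
        have : β j = false := by simpa using hl2
        rw [this]; rfl
    have happ2 : appSeq (execSeq s0 π1) π2 := by
      apply appSeq_of_pre
      intro a ha
      rw [hπ2] at ha; obtain ⟨k, rfl⟩ := List.mem_ofFn.mp ha
      exact ⟨rfl, rfl, Finset.singleton_subset_iff.mpr (hfals k)⟩
    refine hL (π1 ++ π2) hfol ⟨appSeq_append.mpr ⟨happ1, happ2⟩, ?_⟩
    intro x hx
    obtain ⟨k, -, rfl⟩ := Finset.mem_image.mp hx
    rw [execSeq_append, mem_execSeq hd2]
    refine Or.inr ⟨valAct n m K k (g k), ?_, by simp [valAct]⟩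
    rw [hπ2]; exact List.mem_ofFn.mpr ⟨k, rfl⟩
  · -- RHS → LHS
    rintro hR πF hfol ⟨happ, hgoal⟩
    set F := execSeq s0 πF with hF
    have hd : ∀ a ∈ πF, a.del = ∅ := fun a ha => follower_del_empty n m K cubes (hfol a ha)
    obtain ⟨k, hk⟩ := hR (fun j => decide (QFact.Ty j ∈ F))
    have hCk : QFact.C k ∈ F := hgoal (Finset.mem_image.mpr ⟨k, Finset.mem_univ k, rfl⟩)
    rw [hF, mem_execSeq hd] at hCk
    rcases hCk with h | ⟨a, ha, hadd⟩
    · exact s0_no_y n m K α _ (Or.inr ⟨k, rfl⟩) h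
    have hgood : good n m K F := by
      refine good_execSeq n m K (fun j => ?_) happ hfol
      refine ⟨fun h => ?_, fun h => ?_⟩
      · rcases h with h | h
        · exact absurd h (s0_no_y n m K α _ (Or.inl ⟨j, Or.inl rfl⟩))
        · exact absurd h (s0_no_y n m K α _ (Or.inl ⟨j, Or.inr (Or.inl rfl)⟩))
      · exact s0_no_y n m K α _ (Or.inl ⟨j, Or.inl rfl⟩) h.1
    rcases hfol a ha with ⟨j, b, rfl⟩ | ⟨k', l, hl, rfl⟩
    · cases b <;> simp [selY] at hadd
    · simp only [valAct, Finset.mem_singleton, QFact.C.injEq] at hadd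
      subst hadd
      have hpre : falsify n m K l ∈ F :=
        (pre_subset_execSeq hd happ _ ha) (Finset.mem_singleton_self _)
      have hlit := hk l hl
      have hxfact : ∀ i : Fin n,
          (QFact.Tx (m := m) (K := K) i ∈ F → α i = true) ∧
          (QFact.Fx (m := m) (K := K) i ∈ F → α i = false) := by
        intro i
        constructor <;> intro h <;> rw [hF, mem_execSeq hd] at h <;>
          rcases h with h | ⟨a', ha', hadd'⟩
        · exact (Tx_mem_s0 n m K α i).mp h
        · rcases hfol a' ha' with ⟨j', b', rfl⟩ | ⟨k'', l', _, rfl⟩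
          · cases b' <;> simp [selY] at hadd'
          · simp [valAct] at hadd'
        · exact (Fx_mem_s0 n m K α i).mp h
        · rcases hfol a' ha' with ⟨j', b', rfl⟩ | ⟨k'', l', _, rfl⟩
          · cases b' <;> simp [selY] at hadd'
          · simp [valAct] at hadd'
      rcases l with ⟨i | j, b⟩ <;> cases b <;>
        simp only [litVal, beq_iff_eq, decide_eq_true_eq, decide_eq_false_iff_not] at hlit
      · -- (inl i, false) : falsify = Tx i, hlit : α i = false
        exact absurd ((hxfact i).1 hpre) (by simp [hlit])
      · -- (inl i, true) : falsify = Fx i, hlit : α i = true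
        exact absurd ((hxfact i).2 hpre) (by simp [hlit])
      · -- (inr j, false) : falsify = Ty j, hlit : Ty j ∉ F (decide = false)
        exact hlit hpre
      · -- (inr j, true) : falsify = Fy j, hlit : Ty j ∈ F
        exact (hgood j).2 ⟨hlit, hpre⟩
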